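/- Viewing Φ₂(X,Y) as a polynomial in Y with coefficients in ℤ[X], the resultant with respect to Y of Φ₂(X,Y) and its partial derivative ∂Φ₂/∂Y(X,Y) equals −4·X²·(X − 1728)·(X + 3375)²·(X² + 191025X − 121287375)² in ℤ[X]. -/

import Mathlib

/-- The classical modular polynomial of level 2, as a function of two ring elements. -/
def Phi2 {R : Type*} [CommRing R] (x y : R) : R :=
  -x ^ 2 * y ^ 2 + x ^ 3 + 1488 * x ^ 2 * y + 1488 * x * y ^ 2 + y ^ 3
    - 162000 * x ^ 2 + 40773375 * x * y - 162000 * y ^ 2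
    + 8748000000 * x + 8748000000 * y - 157464000000000

/-- The Sylvester matrix of two univariate polynomials `f` and `g`, regarded as polynomials of
degree (at most) `m` and `n` respectively.  The first `n` rows contain the shifted coefficient
sequences of `f` and the last `m` rows the shifted coefficient sequences of `g`. -/
def sylvesterMatrix {R : Type*} [CommRing R] (m n : ℕ) (f g : Polynomial R) :
    Matrix (Fin (m + n)) (Fin (m + n)) R :=
  fun i j =>
    if (i : ℕ) < n then
      -- row `i` (for `i < n`) carries the coefficients of `f`, shifted by `i`
      if (i : ℕ) ≤ (j : ℕ) ∧ (j : ℕ) ≤ m + i then f.coeff (m + i - j) else 0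
    else
      -- row `n + k` carries the coefficients of `g`, shifted by `k = i - n`
      if (i : ℕ) - n ≤ (j : ℕ) ∧ (j : ℕ) ≤ n + ((i : ℕ) - n) then
        g.coeff (n + ((i : ℕ) - n) - j)
      else 0

/-- The resultant of two univariate polynomials of degrees (at most) `m` and `n`:
the determinant of their Sylvester matrix. -/
noncomputable def resultant {R : Type*} [CommRing R] (m n : ℕ) (f g : Polynomial R) : R :=
  (sylvesterMatrix m n f g).det

open Polynomial

/-- Constant coefficient (in `Y`) of `Φ₂`. -/
noncomputable def Phi2c0 : Polynomial ℤ :=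
  X^3 - 162000*X^2 + 8748000000*X - 157464000000000
/-- Coefficient of `Y` in `Φ₂`. -/
noncomputable def Phi2c1 : Polynomial ℤ := 1488*X^2 + 40773375*X + 8748000000
/-- Coefficient of `Y²` in `Φ₂`. -/
noncomputable def Phi2c2 : Polynomial ℤ := -X^2 + 1488*X - 162000

theorem Phi2_eq : Phi2 (C X : Polynomial (Polynomial ℤ)) X
    = C Phi2c0 + C Phi2c1 * X + C Phi2c2 * X^2 + X^3 := by
  simp only [Phi2, Phi2c0, Phi2c1, Phi2c2, map_add, map_sub, map_mul, map_pow, map_neg,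
    map_ofNat]
  ring

theorem Phi2_deriv_eq : derivative (Phi2 (C X : Polynomial (Polynomial ℤ)) X)
    = C Phi2c1 + C (2*Phi2c2) * X + C 3 * X^2 := by
  rw [Phi2_eq]
  simp [derivative_pow, map_ofNat]
  ring

theorem sylvester_phi2_eq :
    sylvesterMatrix 3 2 (Phi2 (C X : Polynomial (Polynomial ℤ)) X)
      (derivative (Phi2 (C X : Polynomial (Polynomial ℤ)) X)) =
    !![1, Phi2c2, Phi2c1, Phi2c0, 0;
       0, 1, Phi2c2, Phi2c1, Phi2c0;
       3, 2*Phi2c2, Phi2c1, 0, 0;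
       0, 3, 2*Phi2c2, Phi2c1, 0;
       0, 0, 3, 2*Phi2c2, Phi2c1] := by
  rw [Phi2_deriv_eq, Phi2_eq]
  ext i j
  fin_cases i <;> fin_cases j <;>
    norm_num [sylvesterMatrix, coeff_add, coeff_C_mul, coeff_X_pow, coeff_C, coeff_X]

theorem det_sylvester_cubic {R : Type*} [CommRing R] (a b c : R) :
    Matrix.det !![1, c, b, a, 0;
       0, 1, c, b, a;
       3, 2*c, b, 0, 0;
       0, 3, 2*c, b, 0;
       0, 0, 3, 2*c, b] =
    4*c^3*a - c^2*b^2 + 4*b^3 + 27*a^2 - 18*a*b*c := by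
  simp [Matrix.det_succ_row_zero, Fin.sum_univ_succ, Fin.succAbove, Fin.castSucc,
    Fin.castAdd, Fin.castLE]
  ring

/-- Viewing `Φ₂(X,Y)` as a polynomial in `Y` over `ℤ[X]` (of degree 3, its derivative in `Y`
having degree 2), the resultant with respect to `Y` of `Φ₂` and `∂Φ₂/∂Y` equals
`−4·X²·(X − 1728)·(X + 3375)²·(X² + 191025X − 121287375)²` in `ℤ[X]`. -/
theorem resultant_phi2_deriv :
    resultant 3 2
        (Phi2 (Polynomial.C Polynomial.X : Polynomial (Polynomial ℤ)) Polynomial.X)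
        (Polynomial.derivative
          (Phi2 (Polynomial.C Polynomial.X : Polynomial (Polynomial ℤ)) Polynomial.X)) =
      -4 * Polynomial.X ^ 2 * (Polynomial.X - 1728) * (Polynomial.X + 3375) ^ 2 *
        (Polynomial.X ^ 2 + 191025 * Polynomial.X - 121287375) ^ 2 := by
  rw [_root_.resultant, sylvester_phi2_eq, det_sylvester_cubic]
  unfold Phi2c0 Phi2c1 Phi2c2
  ring
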